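/- Let (α, T, N, B, κ, τ) be a timelike Frenet curve in E₁³ with κ(s) ≠ 0 and τ(s) ≠ 0 for all s and with 1/κ and 1/τ twice differentiable, and define U(s) = −(1/κ(s))·T(s) − (1/τ(s))·B(s). If there is a function μ : ℝ → ℝ with U''(s) = μ(s)·N(s) for all s, then (1/κ)'' ≡ 0 and (1/τ)'' ≡ 0, so there exist constants a, b, c, d ∈ ℝ with 1/κ(s) = a·s + b and 1/τ(s) = c·s + d for all s; that is, α is a logarithmic spiral in E₁³. -/

import Mathlib

/-- The Minkowski bilinear form on ℝ³: `⟨x,y⟩ = −x₀y₀ + x₁y₁ + x₂y₂`. -/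
def mink (x y : Fin 3 → ℝ) : ℝ := -(x 0 * y 0) + x 1 * y 1 + x 2 * y 2

lemma mink_add_left (x y z : Fin 3 → ℝ) : mink (x + y) z = mink x z + mink y z := by
  simp [mink]; ring
lemma mink_sub_left (x y z : Fin 3 → ℝ) : mink (x - y) z = mink x z - mink y z := by
  simp [mink]; ring
lemma mink_smul_left (a : ℝ) (x y : Fin 3 → ℝ) : mink (a • x) y = a * mink x y := by
  simp [mink]; ring
lemma mink_neg_left (x y : Fin 3 → ℝ) : mink (-x) y = -mink x y := by
  simp [mink]; ring
lemma mink_comm (x y : Fin 3 → ℝ) : mink x y = mink y x := by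
  simp [mink]; ring

lemma deriv_differentiable_of_contDiff2 (f : ℝ → ℝ) (hf : ContDiff ℝ 2 f) :
    Differentiable ℝ (deriv f) := by
  have h2 : ContDiff ℝ ((1:ℕ) + 1) f := by exact_mod_cast hf
  have := (contDiff_succ_iff_deriv.mp h2).2.2
  exact this.differentiable (by simp)

lemma affine_of_deriv2_zero (f : ℝ → ℝ) (hf : ContDiff ℝ 2 f)
    (h : ∀ s, deriv (deriv f) s = 0) : ∃ a b : ℝ, ∀ s, f s = a * s + b := by
  have hd1 : Differentiable ℝ f := hf.differentiable (by simp)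
  have hd2 : Differentiable ℝ (deriv f) := deriv_differentiable_of_contDiff2 f hf
  have hconst : ∀ s, deriv f s = deriv f 0 := fun s =>
    is_const_of_deriv_eq_zero hd2 h s 0
  refine ⟨deriv f 0, f 0, fun s => ?_⟩
  have hF : ∀ u, HasDerivAt (fun u => f u - deriv f 0 * u) 0 u := by
    intro u
    have h1 : HasDerivAt f (deriv f 0) u := by
      have := (hd1 u).hasDerivAt; rwa [hconst u] at this
    exact (h1.sub ((hasDerivAt_id u).const_mul (deriv f 0))).congr_deriv (by simp)
  have hcst : ∀ u, (fun u => f u - deriv f 0 * u) u = (fun u => f u - deriv f 0 * u) 0 :=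
    fun u => is_const_of_deriv_eq_zero (fun v => (hF v).differentiableAt)
      (fun v => (hF v).deriv) u 0
  have := hcst s
  simp at this
  linarith


/-- For a timelike Frenet curve `(α, T, N, B, κ, τ)` in `E₁³` with nonvanishing
`κ, τ` and twice differentiable radii `1/κ`, `1/τ`, if the second derivative of
`U(s) = −(1/κ(s))·T(s) − (1/τ(s))·B(s)` is everywhere proportional to the normal
(`U'' = μ·N`), then `(1/κ)'' ≡ 0` and `(1/τ)'' ≡ 0`, so `1/κ` and `1/τ` are
affine functions of arc length: `α` is a logarithmic spiral in `E₁³`. -/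
theorem U_geodesic_implies_logarithmic_spiral_timelike
    (α T N B : ℝ → Fin 3 → ℝ) (κ τ : ℝ → ℝ)
    (hα : ∀ s, HasDerivAt α (T s) s)
    (hT : ∀ s, HasDerivAt T (κ s • N s) s)
    (hN : ∀ s, HasDerivAt N (κ s • T s + τ s • B s) s)
    (hB : ∀ s, HasDerivAt B (-τ s • N s) s)
    (hTT : ∀ s, mink (T s) (T s) = -1)
    (hNN : ∀ s, mink (N s) (N s) = 1)
    (hBB : ∀ s, mink (B s) (B s) = 1)
    (hTN : ∀ s, mink (T s) (N s) = 0)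
    (hTB : ∀ s, mink (T s) (B s) = 0)
    (hNB : ∀ s, mink (N s) (B s) = 0)
    (hκ0 : ∀ s, κ s ≠ 0) (hτ0 : ∀ s, τ s ≠ 0)
    (hκinv : ContDiff ℝ 2 (fun s : ℝ => (κ s)⁻¹))
    (hτinv : ContDiff ℝ 2 (fun s : ℝ => (τ s)⁻¹))
    (U : ℝ → Fin 3 → ℝ)
    (hU : ∀ s : ℝ, U s = -(κ s)⁻¹ • T s - (τ s)⁻¹ • B s)
    (μ : ℝ → ℝ) (hμ : ∀ s : ℝ, deriv (deriv U) s = μ s • N s) :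
    (∀ s : ℝ, deriv (deriv (fun u : ℝ => (κ u)⁻¹)) s = 0) ∧
    (∀ s : ℝ, deriv (deriv (fun u : ℝ => (τ u)⁻¹)) s = 0) ∧
      ∃ a b c d : ℝ, ∀ s : ℝ, (κ s)⁻¹ = a * s + b ∧ (τ s)⁻¹ = c * s + d := by
  set f : ℝ → ℝ := fun s => (κ s)⁻¹ with hf
  set g : ℝ → ℝ := fun s => (τ s)⁻¹ with hg
  have hfd : Differentiable ℝ f := hκinv.differentiable (by simp)
  have hgd : Differentiable ℝ g := hτinv.differentiable (by simp)
  have hfd2 : Differentiable ℝ (deriv f) := deriv_differentiable_of_contDiff2 f hκinv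
  have hgd2 : Differentiable ℝ (deriv g) := deriv_differentiable_of_contDiff2 g hτinv
  have hUfun : U = fun s => -f s • T s - g s • B s := funext hU
  -- first derivative of U
  have key1 : ∀ s, HasDerivAt U (-(deriv f s) • T s - deriv g s • B s) s := by
    intro s
    rw [hUfun]
    have h1 : HasDerivAt (fun u => -f u • T u)
        (-f s • (κ s • N s) + -(deriv f s) • T s) s :=
      ((hfd s).hasDerivAt.neg).smul (hT s)
    have h2 : HasDerivAt (fun u => g u • B u)
        (g s • (-τ s • N s) + deriv g s • B s) s :=
      (hgd s).hasDerivAt.smul (hB s)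
    have h3 := h1.sub h2
    refine h3.congr_deriv ?_
    funext i
    have e1 : (κ s)⁻¹ * κ s = 1 := inv_mul_cancel₀ (hκ0 s)
    have e2 : (τ s)⁻¹ * τ s = 1 := inv_mul_cancel₀ (hτ0 s)
    simp only [Pi.add_apply, Pi.sub_apply, Pi.smul_apply, Pi.neg_apply, smul_eq_mul, hf, hg]
    have e3 : (κ s)⁻¹ * (κ s * N s i) = N s i := by rw [← mul_assoc, e1, one_mul]
    have e4 : (τ s)⁻¹ * (τ s * N s i) = N s i := by rw [← mul_assoc, e2, one_mul]
    nlinarith [e3, e4]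
  have hdU : deriv U = fun s => -(deriv f s) • T s - deriv g s • B s :=
    funext fun s => (key1 s).deriv
  -- second derivative
  have key2 : ∀ s, deriv (deriv U) s =
      (-(deriv f s) • (κ s • N s) + -(deriv (deriv f) s) • T s) -
      (deriv g s • (-τ s • N s) + deriv (deriv g) s • B s) := by
    intro s
    rw [hdU]
    exact (((hfd2 s).hasDerivAt.neg).smul (hT s)).sub
      ((hgd2 s).hasDerivAt.smul (hB s)) |>.deriv
  have main : ∀ s, deriv (deriv f) s = 0 ∧ deriv (deriv g) s = 0 := by
    intro s
    have hE : (-(deriv f s) • (κ s • N s) + -(deriv (deriv f) s) • T s) -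
        (deriv g s • (-τ s • N s) + deriv (deriv g) s • B s) = μ s • N s := by
      rw [← key2 s]; exact hμ s
    have hNT : mink (N s) (T s) = 0 := (mink_comm _ _).trans (hTN s)
    have hBT : mink (B s) (T s) = 0 := (mink_comm _ _).trans (hTB s)
    constructor
    · have := congrArg (fun v => mink v (T s)) hE
      simp only [mink_sub_left, mink_add_left, mink_smul_left, mink_neg_left,
        hTT, hNT, hBT, hTN, mul_zero, mul_one, mul_neg, neg_zero, add_zero, zero_add,
        sub_zero, neg_neg] at this
      linarith
    · have := congrArg (fun v => mink v (B s)) hE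
      simp only [mink_sub_left, mink_add_left, mink_smul_left, mink_neg_left,
        hBB, hNB, hTB, mul_zero, mul_one, mul_neg, neg_zero, add_zero, zero_add,
        sub_zero, neg_neg] at this
      linarith
  obtain ⟨a, b, hab⟩ := affine_of_deriv2_zero f hκinv (fun s => (main s).1)
  obtain ⟨c, d, hcd⟩ := affine_of_deriv2_zero g hτinv (fun s => (main s).2)
  exact ⟨fun s => (main s).1, fun s => (main s).2, a, b, c, d, fun s => ⟨hab s, hcd s⟩⟩
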